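/- Let L be a symmetric positive semi-definite N×N matrix with rank N-1 and kernel span{(1,...,1)ᵀ}, let Σ = diag(r₁,...,r_N) with all rᵢ > 0, and let R̄ ∈ ℝ^N with αR̄ᵢ ≤ 0 for all i and αR̄ᵢ < 0 for at least one i. Then the matrix L - Σ^{α/2} diag(αR̄₁,...,αR̄_N) Σ^{α/2} is positive definite. -/

import Mathlib

open scoped BigOperators Matrix

/-- Let `L` be symmetric PSD of rank `N-1` with kernel spanned by
`(1,…,1)ᵀ`, `Σ = diag(r)` with `r > 0`, and `R̄ ∈ ℝ^N` with `αR̄ᵢ ≤ 0` for all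
`i` and `αR̄ᵢ < 0` for some `i`. Then `L - Σ^{α/2} diag(αR̄) Σ^{α/2}` is
positive definite. -/
theorem stmt16 (N : ℕ) (hN : 0 < N) (α : ℝ)
    (L : Matrix (Fin N) (Fin N) ℝ) (hL : L.PosSemidef) (hrank : L.rank = N - 1)
    (hker : L.mulVec (fun _ => 1) = 0)
    (r : Fin N → ℝ) (hr : ∀ i, 0 < r i)
    (R : Fin N → ℝ) (hR : ∀ i, α * R i ≤ 0) (hR' : ∃ i, α * R i < 0) :
    (L - Matrix.diagonal (fun i => r i ^ (α / 2)) *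
        Matrix.diagonal (fun i => α * R i) *
        Matrix.diagonal (fun i => r i ^ (α / 2))).PosDef := by
  set d : Fin N → ℝ := fun i => r i ^ (α / 2) * (α * R i) * r i ^ (α / 2) with hd
  have hdiag : Matrix.diagonal (fun i => r i ^ (α / 2)) *
      Matrix.diagonal (fun i => α * R i) *
      Matrix.diagonal (fun i => r i ^ (α / 2)) = Matrix.diagonal d := by
    rw [Matrix.diagonal_mul_diagonal, Matrix.diagonal_mul_diagonal]
  rw [hdiag]
  have hdle : ∀ i, d i ≤ 0 := by
    intro i
    have h1 : (0:ℝ) < r i ^ (α / 2) := Real.rpow_pos_of_pos (hr i) _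
    have h2 := hR i
    show r i ^ (α / 2) * (α * R i) * r i ^ (α / 2) ≤ 0
    exact mul_nonpos_of_nonpos_of_nonneg (mul_nonpos_of_nonneg_of_nonpos h1.le h2) h1.le
  -- kernel of L is spanned by ones
  have hones_mem : (fun _ => (1:ℝ)) ∈ LinearMap.ker L.mulVecLin := by
    simpa [Matrix.mulVecLin_apply] using hker
  have hker_fr : Module.finrank ℝ (LinearMap.ker L.mulVecLin) = 1 := by
    have h := LinearMap.finrank_range_add_finrank_ker L.mulVecLin
    rw [Module.finrank_pi] at h
    have : L.rank + Module.finrank ℝ (LinearMap.ker L.mulVecLin) = N := by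
      simpa [Matrix.rank, Fintype.card_fin] using h
    omega
  have hones_ne : (fun _ => (1:ℝ)) ≠ (0 : Fin N → ℝ) := by
    intro h
    have := congrFun h ⟨0, hN⟩
    norm_num at this
  have hspan : Submodule.span ℝ {(fun _ => (1:ℝ) : Fin N → ℝ)} =
      LinearMap.ker L.mulVecLin := by
    apply Submodule.eq_of_le_of_finrank_eq
    · rwa [Submodule.span_singleton_le_iff_mem]
    · rw [finrank_span_singleton hones_ne, hker_fr]
  rw [Matrix.posDef_iff_dotProduct_mulVec]
  constructor
  · exact (hL.1).sub (Matrix.isHermitian_diagonal d)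
  · intro x hx
    have hq : star x ⬝ᵥ (L - Matrix.diagonal d) *ᵥ x =
        x ⬝ᵥ L *ᵥ x + ∑ i, (-(d i)) * x i ^ 2 := by
      rw [star_trivial, Matrix.sub_mulVec, dotProduct_sub]
      have h2 : x ⬝ᵥ (Matrix.diagonal d) *ᵥ x = ∑ i, d i * x i ^ 2 := by
        simp only [dotProduct, Matrix.mulVec_diagonal]
        exact Finset.sum_congr rfl fun i _ => by ring
      rw [h2, sub_eq_add_neg, ← Finset.sum_neg_distrib]
      congr 1
      exact Finset.sum_congr rfl fun i _ => by ring
    rw [hq]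
    have hsum_nonneg : ∀ i ∈ Finset.univ, (0:ℝ) ≤ (-(d i)) * x i ^ 2 := by
      intro i _
      have := hdle i
      nlinarith [sq_nonneg (x i)]
    have hLq : (0:ℝ) ≤ x ⬝ᵥ L *ᵥ x := by simpa using hL.dotProduct_mulVec_nonneg x
    rcases lt_or_eq_of_le hLq with hpos | heq
    · have : (0:ℝ) ≤ ∑ i, (-(d i)) * x i ^ 2 := Finset.sum_nonneg hsum_nonneg
      linarith
    · -- L x = 0, so x = c • ones
      have hLx : L *ᵥ x = 0 := by
        rw [← hL.dotProduct_mulVec_zero_iff]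
        simpa using heq.symm
      have hxker : x ∈ LinearMap.ker L.mulVecLin := by
        simpa [Matrix.mulVecLin_apply] using hLx
      rw [← hspan, Submodule.mem_span_singleton] at hxker
      obtain ⟨c, hc⟩ := hxker
      have hc0 : c ≠ 0 := by
        rintro rfl
        simp at hc
        exact hx hc.symm
      obtain ⟨i₀, hi₀⟩ := hR'
      have hxi : ∀ i, x i = c := by
        intro i
        rw [← hc]; simp
      have hterm : (0:ℝ) < (-(d i₀)) * x i₀ ^ 2 := by
        have h1 : (0:ℝ) < r i₀ ^ (α / 2) := Real.rpow_pos_of_pos (hr i₀) _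
        have hxne : x i₀ ≠ 0 := by rw [hxi i₀]; exact hc0
        have : 0 < -(d i₀) := by
          show 0 < -(r i₀ ^ (α / 2) * (α * R i₀) * r i₀ ^ (α / 2))
          rw [neg_pos]
          exact mul_neg_of_neg_of_pos (mul_neg_of_pos_of_neg h1 hi₀) h1
        positivity
      have hge : (0:ℝ) < ∑ i, (-(d i)) * x i ^ 2 :=
        Finset.sum_pos' hsum_nonneg ⟨i₀, Finset.mem_univ i₀, hterm⟩
      linarith
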